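/- Let n ∈ ℕ, M > 0, L > 0, h : ℝⁿ → ℝ, and let f(z) = sup_{α ∈ ℝⁿ} ( h(α) − M Σ_i z_i |α_i| ). Let z* ∈ [0,1]ⁿ, let R = { i : 0 < z*_i < 1 } be the set of fractional coordinates, and suppose |R| ≥ 1. Assume: (i) f(z*) is finite and f(z*) ≤ f(z) for every z ∈ {0,1}ⁿ; (ii) for every z ∈ {0,1}ⁿ, f(z) is finite and attained at a maximizer α*(z) with ‖α*(z)‖_∞ ≤ L. Let z be a random vector in {0,1}ⁿ with independent coordinates z_i distributed Bernoulli(z*_i). Then for every ε > 0, with probability at least 1 − |R| · exp( − ε² / (2 M² L² |R|²) ), the rounded vector z satisfies 0 ≤ f(z) − f(z*) ≤ ε. (Theorem 3.1 of the paper, big-M penalty case, with κ = 2 M² L² |R|².) -/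

import Mathlib

open scoped BigOperators

open MeasureTheory

lemma one_sub_sum_le_prod' {α : Type*} (q : α → ℝ) (s : Finset α) :
    (∀ i ∈ s, 0 ≤ q i ∧ q i ≤ 1) → 1 - ∑ i ∈ s, (1 - q i) ≤ ∏ i ∈ s, q i := by
  classical
  induction s using Finset.cons_induction with
  | empty => simp
  | cons a s ha ih =>
    intro hq
    rw [Finset.prod_cons, Finset.sum_cons]
    obtain ⟨h0a, h1a⟩ := hq a (Finset.mem_cons_self a s)
    have ihs := ih fun i hi => hq i (Finset.mem_cons_of_mem hi)
    have hsum : 0 ≤ ∑ i ∈ s, (1 - q i) :=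
      Finset.sum_nonneg fun i hi => by linarith [(hq i (Finset.mem_cons_of_mem hi)).2]
    have hprod : 0 ≤ ∏ i ∈ s, q i :=
      Finset.prod_nonneg fun i hi => (hq i (Finset.mem_cons_of_mem hi)).1
    nlinarith

lemma one_sub_le_exp_neg_sq (t : ℝ) (ht : 0 ≤ t) : 1 - t ≤ Real.exp (-(t ^ 2) / 2) := by
  rcases le_or_gt t 2 with h2 | h2
  · have h1 : 1 - t ≤ Real.exp (-t) := by
      have := Real.add_one_le_exp (-t); linarith
    refine h1.trans (Real.exp_le_exp.mpr ?_)
    nlinarith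
  · have := Real.exp_pos (-(t ^ 2) / 2); linarith

/-- Theorem 3.1 (big-M case): randomized rounding of a relaxation minimizer `zstar`
gives, with probability at least `1 - |R| exp(-ε²/(2M²L²|R|²))`, a binary vector `z`
with `0 ≤ f(z) - f(zstar) ≤ ε`. -/
theorem bigM_randomized_rounding (n : ℕ) (M L : ℝ) (hM : 0 < M) (hL : 0 < L)
    (h : (Fin n → ℝ) → ℝ) (f : (Fin n → ℝ) → ℝ) (αstar : (Fin n → ℝ) → (Fin n → ℝ))
    (zstar : Fin n → ℝ) (hzstar : ∀ i, 0 ≤ zstar i ∧ zstar i ≤ 1)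
    (R : Finset (Fin n)) (hR : R = Finset.univ.filter fun i => 0 < zstar i ∧ zstar i < 1)
    (hRcard : 1 ≤ R.card)
    -- `f zstar` is the supremum value at `zstar` :
    (hubstar : ∀ α : Fin n → ℝ, h α - M * ∑ i, zstar i * |α i| ≤ f zstar)
    -- `zstar` is a relaxation lower bound: `f zstar ≤ f z` for every binary `z` :
    (hmin : ∀ z : Fin n → ℝ, (∀ i, z i = 0 ∨ z i = 1) → f zstar ≤ f z)
    -- at every binary `z`, `f z` is the supremum value, attained at `αstar z` :
    (hub : ∀ z : Fin n → ℝ, (∀ i, z i = 0 ∨ z i = 1) →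
      ∀ α : Fin n → ℝ, h α - M * ∑ i, z i * |α i| ≤ f z)
    (hatt : ∀ z : Fin n → ℝ, (∀ i, z i = 0 ∨ z i = 1) →
      f z = h (αstar z) - M * ∑ i, z i * |αstar z i|)
    (hbdd : ∀ z : Fin n → ℝ, (∀ i, z i = 0 ∨ z i = 1) → ∀ i, |αstar z i| ≤ L)
    -- `μ` is the product Bernoulli(zstar i) measure on `{0,1}ⁿ` :
    (μ : MeasureTheory.Measure (Fin n → Bool))
    (hμ : μ = MeasureTheory.Measure.pi fun i =>
      (PMF.bernoulli (Real.toNNReal (zstar i))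
        (Real.toNNReal_le_one.mpr (hzstar i).2)).toMeasure)
    (ε : ℝ) (hε : 0 < ε) :
    ENNReal.ofReal
        (1 - R.card * Real.exp (-(ε ^ 2) / (2 * M ^ 2 * L ^ 2 * (R.card : ℝ) ^ 2))) ≤
      μ {ω | 0 ≤ f (fun i => if ω i then 1 else 0) - f zstar ∧
             f (fun i => if ω i then 1 else 0) - f zstar ≤ ε} := by
  classical
  have hRpos : (0:ℝ) < R.card := by exact_mod_cast hRcard
  set t : ℝ := ε / (M * L * R.card) with htdef
  have htpos : 0 < t := by positivity
  have hmemR : ∀ i, i ∈ R ↔ (0 < zstar i ∧ zstar i < 1) := by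
    intro i; rw [hR]; simp
  -- fractional predicate
  set S : Fin n → Set Bool := fun i =>
    if zstar i = 0 then {false}
    else if zstar i = 1 then {true}
    else if t < zstar i then {true} else Set.univ with hSdef
  set q : Fin n → ℝ := fun i =>
    if zstar i = 0 then 1
    else if zstar i = 1 then 1
    else if t < zstar i then zstar i else 1 with hqdef
  have hq01 : ∀ i, 0 ≤ q i ∧ q i ≤ 1 := by
    intro i
    simp only [hqdef]
    split_ifs with h1 h2 h3
    · exact ⟨zero_le_one, le_rfl⟩
    · exact ⟨zero_le_one, le_rfl⟩
    · exact ⟨(hzstar i).1, (hzstar i).2⟩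
    · exact ⟨zero_le_one, le_rfl⟩
  -- measure of each coordinate set
  have hν : ∀ i, ((PMF.bernoulli (Real.toNNReal (zstar i))
      (Real.toNNReal_le_one.mpr (hzstar i).2)).toMeasure) (S i) = ENNReal.ofReal (q i) := by
    intro i
    simp only [hSdef, hqdef]
    split_ifs with h1 h2 h3
    · rw [PMF.toMeasure_apply_singleton _ _ (measurableSet_singleton _)]
      simp [PMF.bernoulli_apply, h1]
    · rw [PMF.toMeasure_apply_singleton _ _ (measurableSet_singleton _)]
      simp [PMF.bernoulli_apply, h2]
    · rw [PMF.toMeasure_apply_singleton _ _ (measurableSet_singleton _)]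
      simp [PMF.bernoulli_apply]
      rfl
    · rw [ENNReal.ofReal_one]
      exact measure_univ
  -- the good event
  have hGsub : Set.pi Set.univ S ⊆
      {ω : Fin n → Bool | 0 ≤ f (fun i => if ω i then 1 else 0) - f zstar ∧
             f (fun i => if ω i then 1 else 0) - f zstar ≤ ε} := by
    intro ω hω
    have hωi : ∀ i, ω i ∈ S i := fun i => hω i (Set.mem_univ i)
    set z : Fin n → ℝ := fun i => if ω i then 1 else 0 with hzdef
    have hbin : ∀ i, z i = 0 ∨ z i = 1 := by
      intro i; by_cases hb : ω i <;> simp [hzdef, hb]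
    refine ⟨sub_nonneg.mpr (hmin z hbin), ?_⟩
    have key : f z - f zstar ≤ ∑ i, M * ((zstar i - z i) * |αstar z i|) := by
      have h1 := hatt z hbin
      have h2 := hubstar (αstar z)
      have h3 : ∑ i, M * ((zstar i - z i) * |αstar z i|) =
          M * ∑ i, zstar i * |αstar z i| - M * ∑ i, z i * |αstar z i| := by
        rw [← mul_sub, ← Finset.sum_sub_distrib, Finset.mul_sum]
        congr 1; funext i; ring
      linarith
    have hterm : ∀ i : Fin n, M * ((zstar i - z i) * |αstar z i|) ≤
        if i ∈ R then M * (t * L) else 0 := by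
      intro i
      have habs0 : 0 ≤ |αstar z i| := abs_nonneg _
      have habsL : |αstar z i| ≤ L := hbdd z hbin i
      by_cases hiR : i ∈ R
      · rw [if_pos hiR]
        obtain ⟨hz0, hz1⟩ := (hmemR i).mp hiR
        have hne0 : zstar i ≠ 0 := ne_of_gt hz0
        have hne1 : zstar i ≠ 1 := ne_of_lt hz1
        by_cases hb : ω i
        · have hzi : z i = 1 := by simp [hzdef, hb]
          have h4 : (zstar i - z i) * |αstar z i| ≤ 0 := by
            rw [hzi]; exact mul_nonpos_of_nonpos_of_nonneg (by linarith) habs0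
          have h5 : M * ((zstar i - z i) * |αstar z i|) ≤ 0 :=
            mul_nonpos_of_nonneg_of_nonpos hM.le h4
          have h6 : 0 ≤ M * (t * L) := mul_nonneg hM.le (mul_nonneg htpos.le hL.le)
          linarith
        · have hzi : z i = 0 := by simp [hzdef, hb]
          have hSi := hωi i
          simp only [hSdef, if_neg hne0, if_neg hne1] at hSi
          have hzt : zstar i ≤ t := by
            by_contra hlt
            rw [if_pos (lt_of_not_ge hlt)] at hSi
            simp [hb] at hSi
          rw [hzi, sub_zero]
          have h4 : zstar i * |αstar z i| ≤ t * L :=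
            mul_le_mul hzt habsL habs0 (le_of_lt htpos)
          exact mul_le_mul_of_nonneg_left h4 hM.le
      · rw [if_neg hiR]
        have := (hmemR i).not.mp hiR
        have hcases : zstar i = 0 ∨ zstar i = 1 := by
          rcases (hzstar i).1.eq_or_lt with h0 | h0
          · exact Or.inl h0.symm
          · rcases (hzstar i).2.eq_or_lt with h1 | h1
            · exact Or.inr h1
            · exact absurd ⟨h0, h1⟩ this
        have hz_eq : z i = zstar i := by
          have hSi := hωi i
          rcases hcases with h0 | h0
          · simp only [hSdef, h0, if_pos, Set.mem_singleton_iff] at hSi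
            simp [hzdef, hSi, h0]
          · have hne0 : zstar i ≠ 0 := by rw [h0]; norm_num
            simp only [hSdef, if_neg hne0, h0, if_pos, Set.mem_singleton_iff] at hSi
            simp [hzdef, hSi, h0]
        rw [hz_eq]; simp
    have hsum : ∑ i, M * ((zstar i - z i) * |αstar z i|) ≤ R.card * (M * (t * L)) := by
      calc ∑ i, M * ((zstar i - z i) * |αstar z i|)
          ≤ ∑ i : Fin n, (if i ∈ R then M * (t * L) else 0) := Finset.sum_le_sum fun i _ => hterm i
        _ = ∑ i ∈ R, M * (t * L) := by
            rw [Finset.sum_ite_mem, Finset.univ_inter]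
        _ = R.card * (M * (t * L)) := by rw [Finset.sum_const, nsmul_eq_mul]
    have hεeq : (R.card : ℝ) * (M * (t * L)) = ε := by
      rw [htdef]
      field_simp
    linarith
  -- the measure of the good event
  have hG : μ (Set.pi Set.univ S) = ENNReal.ofReal (∏ i, q i) := by
    rw [hμ, Measure.pi_pi]
    rw [Finset.prod_congr rfl fun i _ => hν i,
      ← ENNReal.ofReal_prod_of_nonneg fun i _ => (hq01 i).1]
  -- the real inequality
  have hreal : 1 - R.card * Real.exp (-(ε ^ 2) / (2 * M ^ 2 * L ^ 2 * (R.card : ℝ) ^ 2))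
      ≤ ∏ i, q i := by
    have hc : -(ε ^ 2) / (2 * M ^ 2 * L ^ 2 * (R.card : ℝ) ^ 2) = -(t ^ 2) / 2 := by
      rw [htdef]
      field_simp
    rw [hc]
    have hqexp : ∀ i : Fin n, 1 - q i ≤ if i ∈ R then Real.exp (-(t ^ 2) / 2) else 0 := by
      intro i
      by_cases hiR : i ∈ R
      · rw [if_pos hiR]
        obtain ⟨hz0, hz1⟩ := (hmemR i).mp hiR
        simp only [hqdef, if_neg (ne_of_gt hz0), if_neg (ne_of_lt hz1)]
        split_ifs with h3
        · have h1 : 1 - zstar i ≤ 1 - t := by linarith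
          exact h1.trans (one_sub_le_exp_neg_sq t htpos.le)
        · simp only [sub_self]
          positivity
      · rw [if_neg hiR]
        have := (hmemR i).not.mp hiR
        have hcases : zstar i = 0 ∨ zstar i = 1 := by
          rcases (hzstar i).1.eq_or_lt with h0 | h0
          · exact Or.inl h0.symm
          · rcases (hzstar i).2.eq_or_lt with h1 | h1
            · exact Or.inr h1
            · exact absurd ⟨h0, h1⟩ this
        rcases hcases with h0 | h0 <;> simp [hqdef, h0]
    have h1 := one_sub_sum_le_prod' q Finset.univ fun i _ => hq01 i
    have h2 : ∑ i : Fin n, (1 - q i) ≤ R.card * Real.exp (-(t ^ 2) / 2) := by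
      calc ∑ i : Fin n, (1 - q i)
          ≤ ∑ i : Fin n, (if i ∈ R then Real.exp (-(t ^ 2) / 2) else 0) :=
            Finset.sum_le_sum fun i _ => hqexp i
        _ = ∑ i ∈ R, Real.exp (-(t ^ 2) / 2) := by
            rw [Finset.sum_ite_mem, Finset.univ_inter]
        _ = R.card * Real.exp (-(t ^ 2) / 2) := by rw [Finset.sum_const, nsmul_eq_mul]
    linarith
  calc ENNReal.ofReal
        (1 - R.card * Real.exp (-(ε ^ 2) / (2 * M ^ 2 * L ^ 2 * (R.card : ℝ) ^ 2)))
      ≤ ENNReal.ofReal (∏ i, q i) := ENNReal.ofReal_le_ofReal hreal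
    _ = μ (Set.pi Set.univ S) := hG.symm
    _ ≤ _ := measure_mono hGsub
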